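/- Let q be a σ-twisted multiline queue (a tuple of queues q_1,...,q_{ℓ−1} where |q_i| = p_{σ(i)}(m)) of type m with p_ℓ(m) = n. Then the type of the word q(1^n) := q_{ℓ−1}(⋯ q_1(1^n) ⋯) equals m. -/

import Mathlib

open scoped BigOperators Classical

namespace MLQ

/-- Words of length `n` over the positive integers (letters are natural numbers,
with `0` unused). Sites are elements of `Fin n`, thought of cyclically. -/
abbrev Word (n : ℕ) := Fin n → ℕ

variable {n : ℕ}

section Cyclic

variable [NeZero n]

/-- the site `s` steps (cyclically) to the right of `i` -/
def shiftR (i : Fin n) (s : ℕ) : Fin n :=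
  ⟨(i.val + s) % n, Nat.mod_lt _ (Nat.pos_of_ne_zero (NeZero.ne n))⟩

/-- the site `s` steps (cyclically) to the left of `i` -/
def shiftL (i : Fin n) (s : ℕ) : Fin n :=
  ⟨(i.val + n - s % n) % n, Nat.mod_lt _ (Nat.pos_of_ne_zero (NeZero.ne n))⟩

/-- number of steps to go (cyclically) right from `i` to `j` -/
def cdistR (i j : Fin n) : ℕ := (j.val + n - i.val) % n

/-- number of steps to go (cyclically) left from `i` to `j` -/
def cdistL (i j : Fin n) : ℕ := (i.val + n - j.val) % n

/-- first site of `s` weakly to the right (cyclically) of `i` -/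
noncomputable def firstRight (i : Fin n) (s : Finset (Fin n)) (h : s.Nonempty) : Fin n :=
  shiftR i ((s.image (cdistR i)).min' (h.image _))

/-- first site of `s` weakly to the left (cyclically) of `i` -/
noncomputable def firstLeft (i : Fin n) (s : Finset (Fin n)) (h : s.Nonempty) : Fin n :=
  shiftL i ((s.image (cdistL i)).min' (h.image _))

/-- One step of Phase II of the queue algorithm: the state consists of the set of
still-unset sites of the queue together with the partial output word; processing
the letter at site `σ p`, it is placed (unchanged) on the first unset queue site
weakly to the right of `σ p`. -/
noncomputable def step2 (u : Word n) (σ : Equiv.Perm (Fin n))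
    (st : Finset (Fin n) × Word n) (p : Fin n) : Finset (Fin n) × Word n :=
  if h : st.1.Nonempty then
    let j := firstRight (σ p) st.1 h
    (st.1.erase j, Function.update st.2 j (u (σ p)))
  else st

/-- One step of Phase I of the queue algorithm: processing the letter at site `σ p`,
the letter `u (σ p) + 1` is placed on the first unset non-queue site weakly to the
left of `σ p`. -/
noncomputable def step1 (u : Word n) (σ : Equiv.Perm (Fin n))
    (st : Finset (Fin n) × Word n) (p : Fin n) : Finset (Fin n) × Word n :=
  if h : st.1.Nonempty then
    let j := firstLeft (σ p) st.1 h
    (st.1.erase j, Function.update st.2 j (u (σ p) + 1))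
  else st

/-- The two-phase queue algorithm computing `q(u)`, using the ordering permutation `σ`
(so the letters are processed in the order `u (σ 0), u (σ 1), …`): Phase II processes
the `|q|` smallest letters in increasing order, Phase I processes the remaining
letters in decreasing order. -/
noncomputable def queueActWith (q : Finset (Fin n)) (σ : Equiv.Perm (Fin n))
    (u : Word n) : Word n :=
  let s2 := ((List.finRange n).take q.card).foldl (step2 u σ) (q, fun _ => 0)
  let s1 := (((List.finRange n).drop q.card).reverse).foldl (step1 u σ) (qᶜ, s2.2)
  s1.2

/-- `σ` is a valid ordering permutation for the word `u`. -/
def IsSorting (u : Word n) (σ : Equiv.Perm (Fin n)) : Prop := Monotone (u ∘ σ)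

/-- The action `q(u)` of a queue `q` on a word `u`, using the canonical sorting
permutation. -/
noncomputable def act (q : Finset (Fin n)) (u : Word n) : Word n :=
  queueActWith q (Tuple.sort u) u

/-- The action of a tuple of queues `(q_1, …, q_k)` on a word (first `q_1`, then `q_2`, …). -/
noncomputable def mlqAct {k : ℕ} (qs : Fin k → Finset (Fin n)) (u : Word n) : Word n :=
  (List.ofFn qs).foldl (fun w q => act q w) u

end Cyclic

/-- the type of a word: `typeOf u i` is the number of occurrences of the letter `i`. -/
def typeOf (u : Word n) : ℕ → ℕ := fun i => (Finset.univ.filter (fun p => u p = i)).card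

/-- partial sums `p_i(m) = m_1 + ⋯ + m_i` of a type -/
def psum (m : ℕ → ℕ) (i : ℕ) : ℕ := ∑ j ∈ Finset.Icc 1 i, m j

/-- number of classes of a type: the largest `i` with `m i ≠ 0` -/
noncomputable def classes (m : ℕ → ℕ) : ℕ := sSup {i | m i ≠ 0}

/-- a packed word: all classes `1, …, ℓ` occur, where `ℓ` is the number of classes -/
def PackedWord (u : Word n) : Prop :=
  (∀ p, 1 ≤ u p) ∧ ∀ j, 1 ≤ j → j ≤ classes (typeOf u) → typeOf u j ≠ 0

/-- merging classes `i` and `i+1` in a word: all letters `> i` are decremented -/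
def mergeWord (i : ℕ) (u : Word n) : Word n := fun p => if i < u p then u p - 1 else u p

/-- merging classes `i` and `i+1` in a type -/
def mergeType (i : ℕ) (m : ℕ → ℕ) : ℕ → ℕ := fun j =>
  if j < i then m j else if j = i then m i + m (i + 1) else m (j + 1)

/-- `∨^(k)`: decrement all but the `k` smallest letters of a word (meaningful when
`k` is a partial sum of the type of the word). -/
def vee (k : ℕ) (u : Word n) : Word n := fun p =>
  if (Finset.univ.filter (fun q => u q ≤ u p)).card ≤ k then u p else u p - 1

/-- iterated merge `∨_T` (the merges `∨_t` are applied for `t ∈ T` in decreasing order) -/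
def mergeWordT (T : Finset ℕ) (u : Word n) : Word n :=
  (T.sort (· ≤ ·)).foldr mergeWord u

/-- iterated merge `∨_T` on types -/
def mergeTypeT (T : Finset ℕ) (m : ℕ → ℕ) : ℕ → ℕ :=
  (T.sort (· ≤ ·)).foldr mergeType m

/-- the weight of a queue, `∏_{j ∈ q} x_j` -/
noncomputable def qwt (q : Finset (Fin n)) : MvPolynomial (Fin n) ℤ :=
  ∏ j ∈ q, MvPolynomial.X j

/-- the `σ`-twisted spectral weight `⟨u⟩_σ` of a word `u`, with respect to a type `m`
with `k + 1` classes: the sum of the weights of all `σ`-twisted multiline queues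
`(q_1, …, q_k)` of type `m` (i.e. `|q_i| = p_{σ(i)}(m)`) with `u = q(1^n)`. -/
noncomputable def swt [NeZero n] (k : ℕ) (m : ℕ → ℕ) (σ : Equiv.Perm (Fin k))
    (u : Word n) : MvPolynomial (Fin n) ℤ :=
  ∑ qs ∈ Finset.univ.filter (fun qs : Fin k → Finset (Fin n) =>
      (∀ i, (qs i).card = psum m ((σ i : ℕ) + 1)) ∧ mlqAct qs (fun _ => 1) = u),
    ∏ i, qwt (qs i)

/-- the (ordinary) spectral weight `⟨u⟩` of a packed word -/
noncomputable def spec [NeZero n] (u : Word n) : MvPolynomial (Fin n) ℤ :=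
  swt (classes (typeOf u) - 1) (typeOf u) (Equiv.refl _) u

/-- the elementary symmetric polynomial `e_k(x_1, …, x_n)` -/
noncomputable def esym (n k : ℕ) : MvPolynomial (Fin n) ℤ :=
  ∑ t ∈ Finset.powersetCard k (Finset.univ : Finset (Fin n)), ∏ j ∈ t, MvPolynomial.X j

/-- the Gale order `A ⪰ B`: same cardinality, and the `k`-th largest element of `A`
is at least the `k`-th largest element of `B`, for every `k` -/
def Dom (A B : Finset ℕ) : Prop :=
  A.card = B.card ∧ ∀ k < A.card,
    (B.sort (· ≤ ·)).reverse.getD k 0 ≤ (A.sort (· ≤ ·)).reverse.getD k 0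

/-- `A ≫ B`: every element of `A` exceeds every element of `B` -/
def Gg (A B : Finset ℕ) : Prop := ∀ a ∈ A, ∀ b ∈ B, b < a

/-- a word is weakly decreasing up to level `t`: any two sites `p < q` with
`u q ≤ t` satisfy `u p ≥ u q` -/
def WDUpTo (t : ℕ) (u : Word n) : Prop :=
  ∀ p q : Fin n, p < q → u q ≤ t → u q ≤ u p

section Dual

variable [NeZero n]

/-- the cyclic interval `{i, i+1, …, i+t}` -/
def cycInterval (i : Fin n) (t : ℕ) : Finset (Fin n) :=
  (Finset.range (t + 1)).image (shiftR i)

/-- the cyclic interval starting at `i` of length `t` is balanced for the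
configuration `(q₁, q₂)` -/
def BalancedInterval (q1 q2 : Finset (Fin n)) (i : Fin n) (t : ℕ) : Prop :=
  (cycInterval i t ∩ q1).card = (cycInterval i t ∩ q2).card ∧
  ∀ l ≤ t, (cycInterval i l ∩ q2).card ≤ (cycInterval i l ∩ q1).card

/-- a site is balanced if it lies in some balanced interval; equivalently, its
parenthesis (if any) is matched in the cyclic parenthesis-matching of the
configuration -/
def BalancedSite (q1 q2 : Finset (Fin n)) (j : Fin n) : Prop :=
  ∃ i t, t < n ∧ BalancedInterval q1 q2 i t ∧ j ∈ cycInterval i t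

/-- the dual configuration: balanced sites keep their memberships, unbalanced
sites swap their memberships between the two queues -/
noncomputable def dualPair (q1 q2 : Finset (Fin n)) : Finset (Fin n) × Finset (Fin n) :=
  (Finset.univ.filter (fun j => if BalancedSite q1 q2 j then j ∈ q1 else j ∈ q2),
   Finset.univ.filter (fun j => if BalancedSite q1 q2 j then j ∈ q2 else j ∈ q1))

/-- the operator `s_i` on tuples of queues, replacing the (0-indexed) adjacent pair
`(q_i, q_{i+1})` by its dual configuration -/
noncomputable def sOp {k : ℕ} (i : ℕ) (qs : Fin k → Finset (Fin n)) :
    Fin k → Finset (Fin n) := fun j =>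
  if h : i + 1 < k then
    (if j.val = i then (dualPair (qs ⟨i, by omega⟩) (qs ⟨i + 1, h⟩)).1
     else if j.val = i + 1 then (dualPair (qs ⟨i, by omega⟩) (qs ⟨i + 1, h⟩)).2
     else qs j)
  else qs j

end Dual



/-! ### Auxiliary machinery for `mlq_type` -/

section AuxCyclic

variable [NeZero n]

lemma shiftR_cdistR (i j : Fin n) : shiftR i (cdistR i j) = j := by
  have hn : 0 < n := Nat.pos_of_ne_zero (NeZero.ne n)
  have hi := i.isLt
  have hj := j.isLt
  apply Fin.ext
  show (i.val + (j.val + n - i.val) % n) % n = j.val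
  rw [Nat.add_mod_mod, show i.val + (j.val + n - i.val) = j.val + n by omega,
    Nat.add_mod_right, Nat.mod_eq_of_lt hj]

lemma shiftL_cdistL (i j : Fin n) : shiftL i (cdistL i j) = j := by
  have hn : 0 < n := Nat.pos_of_ne_zero (NeZero.ne n)
  have hi := i.isLt
  have hj := j.isLt
  apply Fin.ext
  show (i.val + n - ((i.val + n - j.val) % n) % n) % n = j.val
  rw [Nat.mod_mod_of_dvd _ dvd_rfl]
  rcases le_or_gt j.val i.val with h | h
  · rw [show i.val + n - j.val = (i.val - j.val) + n by omega, Nat.add_mod_right,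
      Nat.mod_eq_of_lt (show i.val - j.val < n by omega),
      show i.val + n - (i.val - j.val) = j.val + n by omega,
      Nat.add_mod_right, Nat.mod_eq_of_lt hj]
  · rw [Nat.mod_eq_of_lt (show i.val + n - j.val < n by omega),
      show i.val + n - (i.val + n - j.val) = j.val by omega, Nat.mod_eq_of_lt hj]

lemma firstRight_mem (i : Fin n) (s : Finset (Fin n)) (h : s.Nonempty) :
    firstRight i s h ∈ s := by
  obtain ⟨j, hj, hje⟩ := Finset.mem_image.mp ((s.image (cdistR i)).min'_mem (h.image _))
  rw [firstRight, ← hje, shiftR_cdistR]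
  exact hj

lemma firstLeft_mem (i : Fin n) (s : Finset (Fin n)) (h : s.Nonempty) :
    firstLeft i s h ∈ s := by
  obtain ⟨j, hj, hje⟩ := Finset.mem_image.mp ((s.image (cdistL i)).min'_mem (h.image _))
  rw [firstLeft, ← hje, shiftL_cdistL]
  exact hj

end AuxCyclic


section AuxFold

variable [NeZero n]

/-- cumulative count of letters `≤ j` -/
def cum (u : Word n) (j : ℕ) : ℕ := (Finset.univ.filter (fun p => u p ≤ j)).card

lemma fold_place (step : Finset (Fin n) × Word n → Fin n → Finset (Fin n) × Word n)
    (val : Fin n → ℕ)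
    (hstep : ∀ s w p, s.Nonempty → ∃ j ∈ s,
      step (s, w) p = (s.erase j, Function.update w j (val p))) :
    ∀ (L : List (Fin n)) (s : Finset (Fin n)) (w : Word n), L.length = s.card →
      (∀ j ∉ s, (L.foldl step (s, w)).2 j = w j) ∧
      Multiset.map (L.foldl step (s, w)).2 s.val = Multiset.map val (↑L) := by
  intro L
  induction L with
  | nil =>
    intro s w hlen
    have : s = ∅ := Finset.card_eq_zero.mp hlen.symm
    subst this
    simp
  | cons p L ih =>
    intro s w hlen
    simp only [List.length_cons] at hlen
    have hs : s.Nonempty := Finset.card_pos.mp (by omega)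
    obtain ⟨j, hj, he⟩ := hstep s w p hs
    have hcard : L.length = (s.erase j).card := by
      rw [Finset.card_erase_of_mem hj]; omega
    have ih' := ih (s.erase j) (Function.update w j (val p)) hcard
    constructor
    · intro x hx
      rw [List.foldl_cons, he,
        ih'.1 x (fun hxe => hx (Finset.mem_of_mem_erase hxe))]
      exact Function.update_of_ne (fun hxj => hx (by rw [hxj]; exact hj)) _ _
    · rw [List.foldl_cons, he]
      have hval : s.val = j ::ₘ (s.erase j).val := by
        rw [Finset.erase_val]
        exact (Multiset.cons_erase hj).symm
      rw [hval, Multiset.map_cons,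
        ih'.1 j (Finset.notMem_erase j s), Function.update_self, ih'.2]
      simp

lemma act_multiset (q : Finset (Fin n)) (u : Word n) :
    Multiset.map (act q u) (Finset.univ.val : Multiset (Fin n)) =
      Multiset.map (fun p => u (Tuple.sort u p)) (↑((List.finRange n).take q.card)) +
      Multiset.map (fun p => u (Tuple.sort u p) + 1) (↑((List.finRange n).drop q.card)) := by
  set τ := Tuple.sort u with hτ
  have hk : q.card ≤ n := by
    simpa using Finset.card_le_univ q
  have h2 := fold_place (step2 u τ) (fun p => u (τ p))
    (fun s w p hs => ⟨firstRight (τ p) s hs, firstRight_mem _ s hs, by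
      simp [step2, dif_pos hs]⟩)
    ((List.finRange n).take q.card) q (fun _ => 0)
    (by simp [List.length_take, hk])
  set s2 := ((List.finRange n).take q.card).foldl (step2 u τ) (q, fun _ => 0) with hs2
  have h1 := fold_place (step1 u τ) (fun p => u (τ p) + 1)
    (fun s w p hs => ⟨firstLeft (τ p) s hs, firstLeft_mem _ s hs, by
      simp [step1, dif_pos hs]⟩)
    (((List.finRange n).drop q.card).reverse) qᶜ s2.2
    (by simp [Finset.card_compl])
  set s1 := (((List.finRange n).drop q.card).reverse).foldl (step1 u τ) (qᶜ, s2.2) with hs1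
  have hact : act q u = s1.2 := rfl
  have hsplit : (Finset.univ.val : Multiset (Fin n)) = q.val + qᶜ.val := by
    have h : (q.disjUnion qᶜ disjoint_compl_right).val = q.val + qᶜ.val := rfl
    rw [← h]
    congr 1
    rw [Finset.disjUnion_eq_union, Finset.union_compl]
  rw [hact, hsplit, Multiset.map_add]
  congr 1
  · have : Multiset.map s1.2 q.val = Multiset.map s2.2 q.val := by
      apply Multiset.map_congr rfl
      intro x hx
      exact h1.1 x (by simpa using hx)
    rw [this, h2.2]
  · rw [h1.2]
    congr 1
    exact Multiset.coe_reverse _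

end AuxFold


section AuxCum

variable [NeZero n]

omit [NeZero n] in
lemma cardlt (t : ℕ) : (Finset.univ.filter (fun p : Fin n => p.val < t)).card = min t n := by
  rw [← Finset.card_image_of_injective _ Fin.val_injective]
  have h : (Finset.univ.filter (fun p : Fin n => p.val < t)).image Fin.val =
      Finset.range (min t n) := by
    ext x
    simp only [Finset.mem_image, Finset.mem_filter, Finset.mem_univ, true_and,
      Finset.mem_range]
    constructor
    · rintro ⟨p, hp, rfl⟩
      exact lt_min hp p.isLt
    · intro hx
      exact ⟨⟨x, lt_of_lt_of_le hx (min_le_right _ _)⟩, lt_of_lt_of_le hx (min_le_left _ _), rfl⟩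
  rw [h, Finset.card_range]

omit [NeZero n] in
lemma cum_le (u : Word n) (j : ℕ) : cum u j ≤ n := by
  have := Finset.card_le_univ (Finset.univ.filter (fun p => u p ≤ j))
  simpa [cum] using this

omit [NeZero n] in
lemma monotone_le_iff_lt_cum {w : Word n} (hw : Monotone w) (j : ℕ) (p : Fin n) :
    w p ≤ j ↔ p.val < cum w j := by
  constructor
  · intro h
    have hsub : Finset.univ.filter (fun q : Fin n => q.val < p.val + 1) ⊆
        Finset.univ.filter (fun q => w q ≤ j) := by
      intro x hx
      simp only [Finset.mem_filter, Finset.mem_univ, true_and] at hx ⊢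
      exact le_trans (hw (show x ≤ p from by rw [Fin.le_def]; omega)) h
    have hc := Finset.card_le_card hsub
    rw [cardlt] at hc
    have hpn := p.isLt
    unfold cum
    omega
  · intro h
    by_contra hc
    push_neg at hc
    have hsub : Finset.univ.filter (fun q => w q ≤ j) ⊆
        Finset.univ.filter (fun q : Fin n => q.val < p.val) := by
      intro x hx
      simp only [Finset.mem_filter, Finset.mem_univ, true_and] at hx ⊢
      by_contra hx2
      push_neg at hx2
      have : w p ≤ w x := hw (show p ≤ x from by rw [Fin.le_def]; omega)
      omega
    have hcc := Finset.card_le_card hsub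
    rw [cardlt] at hcc
    have hpn := p.isLt
    unfold cum at h
    omega

omit [NeZero n] in
lemma cum_comp (u : Word n) (τ : Equiv.Perm (Fin n)) (j : ℕ) :
    cum (fun p => u (τ p)) j = cum u j := by
  unfold cum
  have h : (Finset.univ.filter fun p => u (τ p) ≤ j) =
      (Finset.univ.filter fun p => u p ≤ j).map ⟨τ.symm, τ.symm.injective⟩ := by
    ext x
    simp only [Finset.mem_filter, Finset.mem_univ, true_and, Finset.mem_map,
      Function.Embedding.coeFn_mk]
    constructor
    · intro h
      exact ⟨τ x, h, τ.symm_apply_apply x⟩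
    · rintro ⟨y, hy, rfl⟩
      simpa using hy
  rw [h, Finset.card_map]

lemma take_coe (k : ℕ) : (↑((List.finRange n).take k) : Multiset (Fin n)) =
    (Finset.univ.filter (fun p : Fin n => p.val < k)).val := by
  refine (Multiset.Nodup.ext ?_ ?_).mpr ?_
  · exact Multiset.coe_nodup.mpr ((List.nodup_finRange n).sublist (List.take_sublist _ _))
  · exact (Finset.univ.filter (fun p : Fin n => p.val < k)).nodup
  · intro p
    rw [Multiset.mem_coe, ← Finset.mem_def]
    simp only [Finset.mem_filter, Finset.mem_univ, true_and]
    constructor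
    · intro h
      rw [List.mem_take_iff_getElem] at h
      obtain ⟨i, hi, hip⟩ := h
      rw [List.getElem_finRange] at hip
      subst hip
      simp only [List.length_finRange, lt_min_iff] at hi
      simpa using hi.1
    · intro h
      rw [List.mem_take_iff_getElem]
      have hpn := p.isLt
      refine ⟨p.val, ?_, ?_⟩
      · simp only [List.length_finRange, lt_min_iff]
        omega
      · rw [List.getElem_finRange]
        apply Fin.ext
        simp
    
lemma drop_coe (k : ℕ) : (↑((List.finRange n).drop k) : Multiset (Fin n)) =
    (Finset.univ.filter (fun p : Fin n => ¬ p.val < k)).val := by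
  refine (Multiset.Nodup.ext ?_ ?_).mpr ?_
  · exact Multiset.coe_nodup.mpr ((List.nodup_finRange n).sublist (List.drop_sublist _ _))
  · exact (Finset.univ.filter (fun p : Fin n => ¬ p.val < k)).nodup
  · intro p
    rw [Multiset.mem_coe, ← Finset.mem_def]
    simp only [Finset.mem_filter, Finset.mem_univ, true_and]
    constructor
    · intro h
      rw [List.mem_drop_iff_getElem] at h
      obtain ⟨i, hi, hip⟩ := h
      rw [List.getElem_finRange] at hip
      subst hip
      simp
    · intro h
      rw [List.mem_drop_iff_getElem]
      push_neg at h
      refine ⟨p.val - k, ?_, ?_⟩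
      · simp only [List.length_finRange]
        have := p.isLt
        omega
      · rw [List.getElem_finRange]
        apply Fin.ext
        have := p.isLt
        simp
        omega

end AuxCum



section AuxCumAct

variable [NeZero n]

omit [NeZero n] in
lemma card_le_filter_map {α : Type*} (f : α → ℕ) (M : Multiset α) (j : ℕ) :
    Multiset.card ((M.map f).filter (fun x => x ≤ j)) =
      Multiset.card (M.filter (fun a => f a ≤ j)) := by
  induction M using Multiset.induction_on with
  | empty => simp
  | cons a M ih => by_cases h : f a ≤ j <;> simp [h, ih]

omit [NeZero n] in
lemma cum_eq_card (v : Word n) (j : ℕ) :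
    cum v j = Multiset.card ((Multiset.map v Finset.univ.val).filter (fun x => x ≤ j)) := by
  rw [card_le_filter_map]
  rfl

omit [NeZero n] in
lemma card_finset_filter_map (s : Finset (Fin n)) (f : Fin n → ℕ) (j : ℕ) :
    Multiset.card ((Multiset.map f s.val).filter (fun x => x ≤ j)) =
      (s.filter (fun a => f a ≤ j)).card := by
  rw [card_le_filter_map]
  rfl

lemma cum_act_count (q : Finset (Fin n)) (u : Word n) (j : ℕ) :
    cum (act q u) j =
      ((Finset.univ.filter (fun p : Fin n => p.val < q.card)).filter
        (fun p => u (Tuple.sort u p) ≤ j)).card +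
      ((Finset.univ.filter (fun p : Fin n => ¬ p.val < q.card)).filter
        (fun p => u (Tuple.sort u p) + 1 ≤ j)).card := by
  rw [cum_eq_card, act_multiset, take_coe, drop_coe, Multiset.filter_add, Multiset.card_add,
    card_finset_filter_map, card_finset_filter_map]

lemma cum_act_succ (q : Finset (Fin n)) (u : Word n) (j : ℕ) :
    cum (act q u) (j + 1) = min q.card (cum u (j + 1)) + (cum u j - min q.card (cum u j)) := by
  have hw : Monotone (fun p => u (Tuple.sort u p)) := Tuple.monotone_sort u
  have hcc : ∀ i, cum (fun p => u (Tuple.sort u p)) i = cum u i := cum_comp u _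
  have e : ∀ i : ℕ, ∀ p : Fin n, (u (Tuple.sort u p) ≤ i ↔ p.val < cum u i) := by
    intro i p
    rw [← hcc i]
    exact monotone_le_iff_lt_cum hw i p
  set k := q.card
  set c1 := cum u (j + 1) with hc1
  set c0 := cum u j with hc0
  have hc1n : c1 ≤ n := cum_le u (j + 1)
  have hc0n : c0 ≤ n := cum_le u j
  rw [cum_act_count]
  have h1 : ((Finset.univ.filter (fun p : Fin n => p.val < k)).filter
      (fun p => u (Tuple.sort u p) ≤ j + 1)).card = min k c1 := by
    have hs : ((Finset.univ.filter (fun p : Fin n => p.val < k)).filter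
        (fun p => u (Tuple.sort u p) ≤ j + 1))
        = Finset.univ.filter (fun p : Fin n => p.val < min k c1) := by
      ext p
      simp only [Finset.mem_filter, Finset.mem_univ, true_and, e (j + 1) p, lt_min_iff]
      try tauto
    rw [hs, cardlt]
    omega
  have h2 : ((Finset.univ.filter (fun p : Fin n => ¬ p.val < k)).filter
      (fun p => u (Tuple.sort u p) + 1 ≤ j + 1)).card = c0 - min k c0 := by
    have hsplit := Finset.card_filter_add_card_filter_not
      (s := Finset.univ.filter (fun p : Fin n => p.val < c0)) (p := fun p : Fin n => p.val < k)
    have hs1 : (Finset.univ.filter (fun p : Fin n => p.val < c0)).filter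
        (fun p : Fin n => p.val < k) = Finset.univ.filter (fun p : Fin n => p.val < min k c0) := by
      ext p
      simp only [Finset.mem_filter, Finset.mem_univ, true_and, lt_min_iff]
      tauto
    have hs2 : (Finset.univ.filter (fun p : Fin n => p.val < c0)).filter
        (fun p : Fin n => ¬ p.val < k) =
        ((Finset.univ.filter (fun p : Fin n => ¬ p.val < k)).filter
          (fun p => u (Tuple.sort u p) + 1 ≤ j + 1)) := by
      ext p
      simp only [Finset.mem_filter, Finset.mem_univ, true_and]
      have := e j p
      constructor
      · rintro ⟨hp1, hp2⟩
        refine ⟨hp2, by omega⟩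
      · rintro ⟨hp1, hp2⟩
        have := this.mp (by omega)
        exact ⟨this, hp1⟩
    rw [hs1, hs2, cardlt, cardlt] at hsplit
    omega
  rw [h1, h2]

lemma cum_act_zero (q : Finset (Fin n)) (u : Word n) (h : cum u 0 = 0) :
    cum (act q u) 0 = 0 := by
  have hw : Monotone (fun p => u (Tuple.sort u p)) := Tuple.monotone_sort u
  have hcc : ∀ i, cum (fun p => u (Tuple.sort u p)) i = cum u i := cum_comp u _
  rw [cum_act_count]
  have h1 : ((Finset.univ.filter (fun p : Fin n => p.val < q.card)).filter
      (fun p => u (Tuple.sort u p) ≤ 0)) = ∅ := by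
    apply Finset.filter_false_of_mem
    intro p _ hp
    have := (monotone_le_iff_lt_cum hw 0 p).mp hp
    rw [hcc 0, h] at this
    omega
  have h2 : ((Finset.univ.filter (fun p : Fin n => ¬ p.val < q.card)).filter
      (fun p => u (Tuple.sort u p) + 1 ≤ 0)) = ∅ := by
    apply Finset.filter_false_of_mem
    intro p _ hp
    omega
  rw [h1, h2]
  simp

end AuxCumAct


section AuxIns


-- sorted-list insertion machinery (pure ℕ lists)
def ins (a : ℕ) : List ℕ → List ℕ
  | [] => [a]
  | b :: t => if b < a then b :: ins a t else a :: b :: t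

def nthS (d : ℕ) (l : List ℕ) : ℕ → ℕ
  | 0 => 0
  | j + 1 => l.getD j d

lemma ins_perm (a : ℕ) (l : List ℕ) : (ins a l).Perm (a :: l) := by
  induction l with
  | nil => simp [ins]
  | cons b t ih =>
    by_cases h : b < a
    · simp only [ins, if_pos h]
      exact (ih.cons b).trans (List.Perm.swap a b t)
    · simp [ins, if_neg h]

lemma mem_ins {x a : ℕ} {l : List ℕ} : x ∈ ins a l ↔ x = a ∨ x ∈ l := by
  rw [(ins_perm a l).mem_iff]; simp

lemma ins_sorted {a : ℕ} {l : List ℕ} (hl : l.Pairwise (· ≤ ·)) :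
    (ins a l).Pairwise (· ≤ ·) := by
  induction l with
  | nil => simp [ins]
  | cons b t ih =>
    rw [List.pairwise_cons] at hl
    by_cases h : b < a
    · simp only [ins, if_pos h]
      rw [List.pairwise_cons]
      refine ⟨?_, ih hl.2⟩
      intro x hx
      rcases mem_ins.mp hx with rfl | hx
      · exact h.le
      · exact hl.1 x hx
    · simp only [ins, if_neg h]
      rw [List.pairwise_cons]
      refine ⟨?_, by rw [List.pairwise_cons]; exact hl⟩
      intro x hx
      rcases List.mem_cons.mp hx with rfl | hx
      · omega
      · exact le_trans (by omega) (hl.1 x hx)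

lemma getD_lt_of_lt_countP {a : ℕ} {l : List ℕ} (hl : l.Pairwise (· ≤ ·)) (i d : ℕ)
    (h : i < l.countP (fun x => decide (x < a))) : l.getD i d < a := by
  induction l generalizing i with
  | nil => simp at h
  | cons b t ih =>
    rw [List.pairwise_cons] at hl
    by_cases hb : b < a
    · cases i with
      | zero => simpa using hb
      | succ i =>
        rw [List.countP_cons] at h
        simp [hb] at h
        exact ih hl.2 i (by omega)
    · exfalso
      have h0 : t.countP (fun x => decide (x < a)) = 0 := by
        rw [List.countP_eq_zero]
        intro x hx
        have := hl.1 x hx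
        simp only [decide_eq_true_eq]
        omega
      rw [List.countP_cons] at h
      simp [hb] at h
      omega

lemma lt_getD_of_countP_le {a : ℕ} {l : List ℕ} (hl : l.Pairwise (· ≤ ·)) (hal : a ∉ l)
    {d : ℕ} (had : a < d) (i : ℕ) (h : l.countP (fun x => decide (x < a)) ≤ i) :
    a < l.getD i d := by
  induction l generalizing i with
  | nil => simpa using had
  | cons b t ih =>
    rw [List.pairwise_cons] at hl
    have hab : a ≠ b := fun he => hal (he ▸ List.mem_cons_self)
    by_cases hb : b < a
    · rw [List.countP_cons] at h
      simp [hb] at h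
      cases i with
      | zero => omega
      | succ i => exact ih hl.2 (fun hx => hal (List.mem_cons_of_mem b hx)) i (by omega)
    · cases i with
      | zero => simp only [List.getD_cons_zero]; omega
      | succ i =>
        refine ih hl.2 (fun hx => hal (List.mem_cons_of_mem b hx)) i ?_
        have h0 : t.countP (fun x => decide (x < a)) = 0 := by
          rw [List.countP_eq_zero]
          intro x hx
          have := hl.1 x hx
          simp only [decide_eq_true_eq]
          omega
        omega

lemma ins_getD {a : ℕ} {l : List ℕ} (hl : l.Pairwise (· ≤ ·)) (i d : ℕ) :
    (ins a l).getD i d =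
      if i < l.countP (fun x => decide (x < a)) then l.getD i d
      else if i = l.countP (fun x => decide (x < a)) then a
      else l.getD (i - 1) d := by
  induction l generalizing i with
  | nil =>
    simp only [ins, List.countP_nil]
    cases i with
    | zero => simp
    | succ i => simp
  | cons b t ih =>
    rw [List.pairwise_cons] at hl
    by_cases hb : b < a
    · have hc : (b :: t).countP (fun x => decide (x < a)) =
          t.countP (fun x => decide (x < a)) + 1 := by
        rw [List.countP_cons]; simp [hb]
      simp only [ins, if_pos hb]
      cases i with
      | zero => simp [hc]
      | succ i =>
        rw [List.getD_cons_succ, ih hl.2 i, hc]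
        set r := t.countP (fun x => decide (x < a)) with hr
        by_cases h1 : i < r
        · rw [if_pos h1, if_pos (by omega)]
          simp
        · rw [if_neg h1]
          by_cases h2 : i = r
          · rw [if_pos h2, if_neg (by omega), if_pos (by omega)]
          · rw [if_neg h2, if_neg (by omega), if_neg (by omega)]
            have : i ≥ 1 := by omega
            rw [show i + 1 - 1 = (i - 1) + 1 by omega, List.getD_cons_succ]
    · have hc : (b :: t).countP (fun x => decide (x < a)) = 0 := by
        rw [List.countP_eq_zero]
        intro x hx
        rcases List.mem_cons.mp hx with rfl | hx
        · simpa using hb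
        · have := hl.1 x hx
          simp only [decide_eq_true_eq]
          omega
      simp only [ins, if_neg hb, hc]
      cases i with
      | zero => simp
      | succ i => simp

lemma step_nthS {P : ℕ → ℕ} (hP : Monotone P) (hP0 : P 0 = 0) {d : ℕ} {l : List ℕ}
    (hl : l.Pairwise (· ≤ ·)) {a : ℕ} (ha1 : 1 ≤ a) (had : a < d) (hal : a ∉ l) (j : ℕ) :
    min (P a) (P (nthS d l (j + 1))) + (P (nthS d l j) - min (P a) (P (nthS d l j)))
      = P (nthS d (ins a l) (j + 1)) := by
  set r := l.countP (fun x => decide (x < a)) with hr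
  have key : nthS d (ins a l) (j + 1) =
      if j < r then l.getD j d else if j = r then a else l.getD (j - 1) d := by
    rw [nthS, ins_getD hl]
  rcases lt_trichotomy j r with hj | hj | hj
  · have h1 : l.getD j d < a := getD_lt_of_lt_countP hl j d hj
    have h0 : nthS d l j < a := by
      cases j with
      | zero => show 0 < a; omega
      | succ j => exact getD_lt_of_lt_countP hl j d (by omega)
    rw [key, if_pos hj]
    have e1 : nthS d l (j + 1) = l.getD j d := rfl
    rw [e1, min_eq_right (hP h1.le), min_eq_right (hP h0.le)]
    omega
  · have h1 : a < l.getD j d := lt_getD_of_countP_le hl hal had j (by omega)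
    have e1 : nthS d l (j + 1) = l.getD j d := rfl
    rw [key, if_neg (by omega), if_pos hj, e1, min_eq_left (hP h1.le)]
    cases j with
    | zero =>
      have : r = 0 := by omega
      simp [nthS, hP0]
    | succ j =>
      have h0 : nthS d l (j + 1) < a := by
        exact getD_lt_of_lt_countP hl j d (by omega)
      rw [min_eq_right (hP h0.le)]
      omega
  · have h1 : a < l.getD j d := lt_getD_of_countP_le hl hal had j (by omega)
    have hj1 : 1 ≤ j := by omega
    have h0 : a < nthS d l j := by
      cases j with
      | zero => omega
      | succ j => exact lt_getD_of_countP_le hl hal had j (by omega)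
    have e1 : nthS d l (j + 1) = l.getD j d := rfl
    rw [key, if_neg (by omega), if_neg (by omega), e1,
      min_eq_left (hP h1.le), min_eq_left (hP h0.le)]
    have : P a ≤ P (nthS d l j) := hP h0.le
    have e2 : l.getD (j - 1) d = nthS d l j := by
      cases j with
      | zero => omega
      | succ j => rfl
    rw [e2]
    omega


end AuxIns

section AuxMain

lemma psum_mono (m : ℕ → ℕ) : Monotone (psum m) := by
  intro a b h
  exact Finset.sum_le_sum_of_subset (Finset.Icc_subset_Icc_right h)

lemma psum_zero (m : ℕ → ℕ) : psum m 0 = 0 := by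
  simp [psum]

variable [NeZero n]

lemma main_fold {P : ℕ → ℕ} (hP : Monotone P) (hP0 : P 0 = 0) (d : ℕ) :
    ∀ (A : List ℕ) (Q : List (Finset (Fin n))) (u : Word n) (l : List ℕ),
      A.length = Q.length →
      (∀ i, i < Q.length → (Q.getD i ∅).card = P (A.getD i 0)) →
      (A ++ l).Nodup → (∀ x ∈ A, 1 ≤ x ∧ x < d) →
      l.Pairwise (· ≤ ·) →
      (∀ j, cum u j = P (nthS d l j)) →
      ∃ l', l'.Pairwise (· ≤ ·) ∧ l'.Perm (A ++ l) ∧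
        ∀ j, cum (Q.foldl (fun w q => act q w) u) j = P (nthS d l' j) := by
  intro A
  induction A with
  | nil =>
    intro Q u l hlen _ _ _ hsort hcum
    have hQ : Q = [] := List.length_eq_zero_iff.mp hlen.symm
    subst hQ
    exact ⟨l, hsort, by simp, hcum⟩
  | cons a A ih =>
    intro Q u l hlen hQ hnd hbd hsort hcum
    cases Q with
    | nil => simp at hlen
    | cons q Q =>
      have hq : q.card = P a := by simpa using hQ 0 (by simp)
      have hal : a ∉ l := by
        have hnd2 := hnd
        rw [List.cons_append, List.nodup_cons] at hnd2
        exact fun h => hnd2.1 (List.mem_append.mpr (Or.inr h))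
      have ha1 : 1 ≤ a := (hbd a (List.mem_cons_self)).1
      have had : a < d := (hbd a (List.mem_cons_self)).2
      have hstep : ∀ j, cum (act q u) j = P (nthS d (ins a l) j) := by
        intro j
        cases j with
        | zero =>
          rw [show nthS d (ins a l) 0 = 0 from rfl, hP0]
          apply cum_act_zero
          rw [hcum 0, show nthS d l 0 = 0 from rfl, hP0]
        | succ j =>
          rw [cum_act_succ, hq, hcum, hcum, step_nthS hP hP0 hsort ha1 had hal j]
      have hperm : (A ++ ins a l).Perm ((a :: A) ++ l) :=
        ((ins_perm a l).append_left A).trans List.perm_middle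
      have hnd' : (A ++ ins a l).Nodup := hperm.nodup_iff.mpr hnd
      obtain ⟨l', h1, h2, h3⟩ := ih Q (act q u) (ins a l)
        (by simpa using hlen)
        (fun i hi => by simpa using hQ (i + 1) (by simpa using hi))
        hnd'
        (fun x hx => hbd x (List.mem_cons_of_mem a hx))
        (ins_sorted hsort)
        hstep
      refine ⟨l', h1, ?_, by simpa using h3⟩
      exact h2.trans hperm

end AuxMain

/-- The type of the word `q(1^n)` produced by a `σ`-twisted multiline queue `q` of type
`m` (with `ℓ` classes and `p_ℓ(m) = n`) is `m` itself. -/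
theorem mlq_type {n ℓ : ℕ} [NeZero n] (hℓ : 1 ≤ ℓ) (m : ℕ → ℕ)
    (hm0 : m 0 = 0) (htop : ∀ j, ℓ < j → m j = 0) (hn : psum m ℓ = n)
    (σ : Equiv.Perm (Fin (ℓ - 1))) (qs : Fin (ℓ - 1) → Finset (Fin n))
    (hqs : ∀ i, (qs i).card = psum m ((σ i : ℕ) + 1)) :
    typeOf (mlqAct qs (fun _ => 1)) = m := by
  classical
  have hPmono : Monotone (psum m) := psum_mono m
  have hP0 : psum m 0 = 0 := psum_zero m
  have hpsum_stab : ∀ i, ℓ ≤ i → psum m i = psum m ℓ := by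
    intro i hi
    unfold psum
    rw [Finset.sum_subset (Finset.Icc_subset_Icc_right hi)]
    intro x hx hx2
    simp only [Finset.mem_Icc] at hx hx2
    exact htop x (by omega)
  have hAinj : Function.Injective (fun i : Fin (ℓ - 1) => (σ i : ℕ) + 1) := by
    intro i j hij
    simp only at hij
    exact σ.injective (Fin.ext (by omega))
  obtain ⟨l', hl'sorted, hl'perm, hl'cum⟩ :=
    main_fold hPmono hP0 ℓ (List.ofFn (fun i : Fin (ℓ - 1) => (σ i : ℕ) + 1))
      (List.ofFn qs) (fun _ => 1) []
      (by simp)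
      (by
        intro i hi
        have hi' : i < ℓ - 1 := by simpa using hi
        rw [List.getD_eq_getElem _ _ (show i < (List.ofFn qs).length by simpa using hi'),
          List.getD_eq_getElem _ _
            (show i < (List.ofFn (fun i : Fin (ℓ - 1) => (σ i : ℕ) + 1)).length by
              simpa using hi'),
          List.getElem_ofFn, List.getElem_ofFn]
        exact hqs _)
      (by
        simp only [List.append_nil]
        exact List.nodup_ofFn.mpr hAinj)
      (by
        intro x hx
        rw [List.mem_ofFn] at hx
        obtain ⟨i, hix⟩ := hx
        have h2 := (σ i).isLt
        omega)
      List.Pairwise.nil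
      (by
        intro j
        cases j with
        | zero =>
          rw [show nthS ℓ [] 0 = 0 from rfl, hP0]
          unfold cum
          rw [Finset.card_eq_zero]
          apply Finset.filter_false_of_mem
          intro p _
          show ¬ (1 : ℕ) ≤ 0
          omega
        | succ j =>
          rw [show nthS ℓ [] (j + 1) = ℓ from rfl, hn]
          unfold cum
          rw [Finset.filter_true_of_mem (fun p _ => show (1 : ℕ) ≤ j + 1 by omega)]
          simp)
  rw [List.append_nil] at hl'perm
  have hl'eq : l' = List.range' 1 (ℓ - 1) := by
    apply List.Perm.eq_of_pairwise' hl'sorted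
      ((List.pairwise_lt_range' (s := 1) (n := ℓ - 1)).imp le_of_lt) ?_
    refine (hl'perm.trans ?_)
    apply Multiset.coe_eq_coe.mp
    refine (Multiset.Nodup.ext ?_ ?_).mpr ?_
    · exact Multiset.coe_nodup.mpr (List.nodup_ofFn.mpr hAinj)
    · exact Multiset.coe_nodup.mpr (List.nodup_range' (s := 1) (n := ℓ - 1))
    · intro x
      simp only [Multiset.mem_coe, List.mem_ofFn, List.mem_range'_1, Set.mem_range]
      constructor
      · rintro ⟨i, hix⟩
        have h2 := (σ i).isLt
        omega
      · rintro ⟨hx1, hx2⟩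
        refine ⟨σ.symm ⟨x - 1, by omega⟩, ?_⟩
        show (σ (σ.symm ⟨x - 1, by omega⟩) : ℕ) + 1 = x
        rw [σ.apply_symm_apply]
        show (x - 1) + 1 = x
        omega
  have hwcum : ∀ j, cum (mlqAct qs (fun _ => 1)) j = psum m j := by
    intro j
    have hfold : mlqAct qs (fun _ => 1) =
        (List.ofFn qs).foldl (fun w q => act q w) (fun _ => 1) := rfl
    rw [hfold, hl'cum j, hl'eq]
    cases j with
    | zero => rw [show nthS ℓ (List.range' 1 (ℓ - 1)) 0 = 0 from rfl]
    | succ j =>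
      rw [show nthS ℓ (List.range' 1 (ℓ - 1)) (j + 1)
          = (List.range' 1 (ℓ - 1)).getD j ℓ from rfl]
      by_cases hj : j < ℓ - 1
      · rw [List.getD_eq_getElem _ _ (by simpa using hj), List.getElem_range'_1]
        congr 1
        omega
      · rw [List.getD_eq_default _ _ (by simpa using hj), hpsum_stab (j + 1) (by omega)]
  set w : Word n := mlqAct qs (fun _ => 1) with hwdef
  funext j
  cases j with
  | zero =>
    have h0 : typeOf w 0 = cum w 0 := by
      unfold typeOf cum
      congr 1
      ext p
      simp [Nat.le_zero]
    rw [h0, hwcum 0, hP0, hm0]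
  | succ j =>
    have hsplit := Finset.card_filter_add_card_filter_not
      (s := Finset.univ.filter (fun p : Fin n => w p ≤ j + 1)) (p := fun p : Fin n => w p ≤ j)
    have hs1 : (Finset.univ.filter (fun p : Fin n => w p ≤ j + 1)).filter
        (fun p : Fin n => w p ≤ j) = Finset.univ.filter (fun p : Fin n => w p ≤ j) := by
      ext p
      simp only [Finset.mem_filter, Finset.mem_univ, true_and]
      omega
    have hs2 : (Finset.univ.filter (fun p : Fin n => w p ≤ j + 1)).filter
        (fun p : Fin n => ¬ w p ≤ j) = Finset.univ.filter (fun p : Fin n => w p = j + 1) := by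
      ext p
      simp only [Finset.mem_filter, Finset.mem_univ, true_and]
      omega
    rw [hs1, hs2] at hsplit
    have ht : typeOf w (j + 1) = (Finset.univ.filter (fun p : Fin n => w p = j + 1)).card := rfl
    have hc1 : (Finset.univ.filter (fun p : Fin n => w p ≤ j + 1)).card = psum m (j + 1) :=
      hwcum (j + 1)
    have hc0 : (Finset.univ.filter (fun p : Fin n => w p ≤ j)).card = psum m j := hwcum j
    have hsum : psum m (j + 1) = psum m j + m (j + 1) := by
      unfold psum
      rw [Finset.sum_Icc_succ_top (by omega)]
    rw [ht]
    omega

end MLQ
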